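/- Let l > 1 and let a : ℝ → ℝ be continuous with l − 1 ≤ a(t) ≤ l + 1 for all t. Suppose λ : ℝ → ℝ is differentiable and solves the Riccati equation λ'(t) = a(t) − λ(t)²/l². If λ(t₀) ∈ [l·√(l−1), l·√(l+1)] for some t₀, then λ(t) ∈ [l·√(l−1), l·√(l+1)] for all t ≥ t₀; i.e. the interval [l·√(l−1), l·√(l+1)] is forward invariant for this Riccati equation. -/
import Mathlib


open Real

private lemma riccati_forward_le {f f' : ℝ → ℝ} (hf : ∀ t, HasDerivAt f (f' t) t) (M : ℝ)
    (hM : ∀ t, M ≤ f t → f' t ≤ 0) (t₀ : ℝ) (h₀ : f t₀ ≤ M) :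
    ∀ t ≥ t₀, f t ≤ M := by
  have hcont : Continuous f := continuous_iff_continuousAt.2 fun t => (hf t).continuousAt
  intro t₁ ht₁
  by_contra hc
  push_neg at hc
  set S : Set ℝ := {t | t ∈ Set.Icc t₀ t₁ ∧ f t ≤ M} with hS
  have hSc : IsCompact S := (isCompact_Icc.inter_right (isClosed_Iic.preimage hcont)).of_isClosed_subset
    ((isClosed_Icc.inter (isClosed_Iic.preimage hcont))) (by intro x hx; exact ⟨hx.1, hx.2⟩)
  have hSne : S.Nonempty := ⟨t₀, ⟨le_refl _, ht₁⟩, h₀⟩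
  have hsmem : sSup S ∈ S := hSc.sSup_mem hSne
  set s := sSup S
  have hst₁ : s ≤ t₁ := hsmem.1.2
  have hgt : ∀ t ∈ Set.Ioc s t₁, M < f t := by
    intro t ht
    by_contra h
    push_neg at h
    have : t ∈ S := ⟨⟨hsmem.1.1.trans ht.1.le, ht.2⟩, h⟩
    exact absurd (le_csSup hSc.bddAbove this) (not_le.2 ht.1)
  have hanti : AntitoneOn f (Set.Icc s t₁) := by
    apply antitoneOn_of_deriv_nonpos (convex_Icc s t₁) hcont.continuousOn
    · intro x _; exact (hf x).differentiableAt.differentiableWithinAt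
    · intro x hx
      rw [interior_Icc] at hx
      rw [(hf x).deriv]
      exact hM x (hgt x ⟨hx.1, hx.2.le⟩).le
  have hslt : s < t₁ := lt_of_le_of_ne hst₁ (fun h => absurd hsmem.2 (by rw [h]; exact not_le.2 hc))
  have := hanti (Set.left_mem_Icc.2 hst₁) (Set.right_mem_Icc.2 hst₁) hst₁
  exact absurd (this.trans hsmem.2) (not_le.2 hc)

private lemma riccati_forward_ge {f f' : ℝ → ℝ} (hf : ∀ t, HasDerivAt f (f' t) t) (m : ℝ)
    (hm : 0 < m) (hmono : ∀ t, -m ≤ f t → f t ≤ m → 0 ≤ f' t) (t₀ : ℝ) (h₀ : m ≤ f t₀) :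
    ∀ t ≥ t₀, m ≤ f t := by
  have hcont : Continuous f := continuous_iff_continuousAt.2 fun t => (hf t).continuousAt
  intro t₁ ht₁
  by_contra hc
  push_neg at hc
  set S : Set ℝ := {t | t ∈ Set.Icc t₀ t₁ ∧ m ≤ f t} with hS
  have hScl : IsClosed S := isClosed_Icc.inter (isClosed_Ici.preimage hcont)
  have hSc : IsCompact S := isCompact_Icc.of_isClosed_subset hScl (fun x hx => hx.1)
  have hSne : S.Nonempty := ⟨t₀, ⟨le_refl _, ht₁⟩, h₀⟩
  have hsmem : sSup S ∈ S := hSc.sSup_mem hSne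
  set s := sSup S
  have hst₁ : s ≤ t₁ := hsmem.1.2
  have hlt : ∀ t ∈ Set.Ioc s t₁, f t < m := by
    intro t ht
    by_contra h
    push_neg at h
    have : t ∈ S := ⟨⟨hsmem.1.1.trans ht.1.le, ht.2⟩, h⟩
    exact absurd (le_csSup hSc.bddAbove this) (not_le.2 ht.1)
  -- find u
  set T : Set ℝ := {t | t ∈ Set.Icc s t₁ ∧ f t ≤ -m} with hT
  have hTcl : IsClosed T := isClosed_Icc.inter (isClosed_Iic.preimage hcont)
  have hTc : IsCompact T := isCompact_Icc.of_isClosed_subset hTcl (fun x hx => hx.1)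
  have key : ∀ u, s ≤ u → u ≤ t₁ → (∀ t ∈ Set.Ico s u, -m < f t) → m ≤ f u := by
    intro u hsu hut₁ hband
    have hmono' : MonotoneOn f (Set.Icc s u) := by
      apply monotoneOn_of_deriv_nonneg (convex_Icc s u) hcont.continuousOn
      · intro x _; exact (hf x).differentiableAt.differentiableWithinAt
      · intro x hx
        rw [interior_Icc] at hx
        rw [(hf x).deriv]
        exact hmono x (hband x ⟨hx.1.le, hx.2⟩).le (hlt x ⟨hx.1, hx.2.le.trans hut₁⟩).le
    exact hsmem.2.trans (hmono' (Set.left_mem_Icc.2 hsu) (Set.right_mem_Icc.2 hsu) hsu)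
  by_cases hTe : T.Nonempty
  · have humem : sInf T ∈ T := hTc.sInf_mem hTe
    set u := sInf T
    have hband : ∀ t ∈ Set.Ico s u, -m < f t := by
      intro t ht
      by_contra h
      push_neg at h
      have : t ∈ T := ⟨⟨ht.1, ht.2.le.trans humem.1.2⟩, h⟩
      exact absurd (csInf_le hTc.bddBelow this) (not_le.2 ht.2)
    have : m ≤ f u := key u humem.1.1 humem.1.2 hband
    linarith [humem.2]
  · have hband : ∀ t ∈ Set.Ico s t₁, -m < f t := by
      intro t ht
      by_contra h
      push_neg at h
      exact hTe ⟨t, ⟨ht.1, ht.2.le⟩, h⟩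
    exact absurd (key t₁ hst₁ le_rfl hband) (not_le.2 hc)

/-- Forward invariance of the interval `[l√(l−1), l√(l+1)]` for the Riccati
equation `λ' = a(t) − λ²/l²` when `l − 1 ≤ a(t) ≤ l + 1` and `l > 1`. -/
theorem riccati_interval_forward_invariant
    (l : ℝ) (hl : 1 < l)
    (a : ℝ → ℝ) (ha : Continuous a)
    (hab : ∀ t, l - 1 ≤ a t ∧ a t ≤ l + 1)
    (lam : ℝ → ℝ)
    (hlam : ∀ t, HasDerivAt lam (a t - (lam t) ^ 2 / l ^ 2) t)
    (t₀ : ℝ)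
    (h₀ : lam t₀ ∈ Set.Icc (l * Real.sqrt (l - 1)) (l * Real.sqrt (l + 1))) :
    ∀ t ≥ t₀, lam t ∈ Set.Icc (l * Real.sqrt (l - 1)) (l * Real.sqrt (l + 1)) := by
  have hl0 : (0:ℝ) < l := by linarith
  set m := l * Real.sqrt (l - 1) with hmdef
  set M := l * Real.sqrt (l + 1) with hMdef
  have hm2 : m ^ 2 = l ^ 2 * (l - 1) := by
    rw [hmdef, mul_pow, sq_sqrt (by linarith : (0:ℝ) ≤ l - 1)]
  have hM2 : M ^ 2 = l ^ 2 * (l + 1) := by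
    rw [hMdef, mul_pow, sq_sqrt (by linarith : (0:ℝ) ≤ l + 1)]
  have hmpos : 0 < m := mul_pos hl0 (Real.sqrt_pos.2 (by linarith))
  have hMpos : 0 < M := mul_pos hl0 (Real.sqrt_pos.2 (by linarith))
  have hl2 : (0:ℝ) < l ^ 2 := by positivity
  intro t ht
  constructor
  · refine riccati_forward_ge hlam m hmpos ?_ t₀ h₀.1 t ht
    intro u h1 h2
    have hsq : (lam u) ^ 2 ≤ m ^ 2 := sq_le_sq' h1 h2
    have := (hab u).1
    rw [hm2] at hsq
    have : (lam u) ^ 2 / l ^ 2 ≤ l - 1 := by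
      rw [div_le_iff₀ hl2]; linarith [hsq]
    linarith [(hab u).1]
  · refine riccati_forward_le hlam M ?_ t₀ h₀.2 t ht
    intro u h1
    have hsq : M ^ 2 ≤ (lam u) ^ 2 := by
      have := pow_le_pow_left₀ hMpos.le h1 2
      linarith [this]
    rw [hM2] at hsq
    have : l + 1 ≤ (lam u) ^ 2 / l ^ 2 := by
      rw [le_div_iff₀ hl2]; linarith [hsq]
    linarith [(hab u).2]
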